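/- Let X2− ∈ ℝ^{n×τ} and F ∈ ℝ^{n×τ}. Suppose there exists Θ ∈ ℝ^{τ×n} such that X2−·Θ is symmetric and the block matrix [[X2−·Θ, F·Θ],[Θᵀ·Fᵀ, X2−·Θ]] is positive definite. Then X2− has full row rank, X2−† := Θ·(X2−·Θ)⁻¹ is a right inverse of X2−, and F·X2−† is stable (spectral radius < 1). -/

import Mathlib

open Matrix
open scoped ComplexOrder

noncomputable section

local notation "φ" => algebraMap ℝ ℂ

lemma mapC_conjTranspose {m k : Type*} (A : Matrix m k ℝ) :
    (A.map φ)ᴴ = Aᵀ.map φ := by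
  ext i j
  simp [conjTranspose_apply, Matrix.map_apply, Complex.conj_ofReal]

lemma mapC_mulVec_star {m k : Type*} [Fintype k] (A : Matrix m k ℝ) (w : k → ℂ) :
    (A.map φ) *ᵥ (star w) = star ((A.map φ) *ᵥ w) := by
  funext i
  simp only [Matrix.mulVec, dotProduct, Pi.star_apply, Matrix.map_apply, star_sum,
    star_mul', Complex.star_def, Complex.conj_ofReal]
  exact Finset.sum_congr rfl fun j _ => by
    rw [show (starRingEnd ℂ) (φ (A i j)) = φ (A i j) from Complex.conj_ofReal _]

lemma posDef_mapC {k : Type*} [Fintype k] [DecidableEq k] {A : Matrix k k ℝ}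
    (hA : A.PosDef) : (A.map φ).PosDef := by
  obtain ⟨B, hB⟩ : ∃ B : Matrix k k ℝ, A = Bᴴ * B := by
    open MatrixOrder in exact CStarAlgebra.nonneg_iff_eq_star_mul_self.mp hA.posSemidef.nonneg
  have hdetB : B.det ≠ 0 := by
    intro h
    have h2 := hA.det_pos
    rw [hB] at h2
    simp [Matrix.det_mul, Matrix.det_conjTranspose, h] at h2
  have hmap : A.map φ = (B.map φ)ᴴ * (B.map φ) := by
    rw [mapC_conjTranspose, ← Matrix.map_mul]
    rw [hB, Matrix.conjTranspose_eq_transpose_of_trivial]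
  refine Matrix.PosDef.of_dotProduct_mulVec_pos ?_ ?_
  · rw [Matrix.IsHermitian, mapC_conjTranspose,
      ← Matrix.conjTranspose_eq_transpose_of_trivial, hA.1.eq]
  · intro x hx
    have hBx : (B.map φ) *ᵥ x ≠ 0 := by
      intro h
      have : (B.map φ).det = 0 := Matrix.exists_mulVec_eq_zero_iff.mp ⟨x, hx, h⟩
      rw [show (B.map φ) = ((algebraMap ℝ ℂ).mapMatrix B) from rfl, ← RingHom.map_det] at this
      exact hdetB (by
        have : Complex.ofReal B.det = 0 := this
        exact_mod_cast this)
    calc (0 : ℂ) < star ((B.map φ) *ᵥ x) ⬝ᵥ ((B.map φ) *ᵥ x) :=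
          Matrix.dotProduct_star_self_pos_iff.mpr hBx
      _ = star x ⬝ᵥ ((A.map φ) *ᵥ x) := by
          rw [hmap, ← Matrix.mulVec_mulVec, Matrix.star_mulVec]
          simp only [Matrix.dotProduct_mulVec, Matrix.vecMul_vecMul]

set_option maxHeartbeats 1000000 in

def IsStable {n : Type*} [Fintype n] [DecidableEq n] (M : Matrix n n ℝ) : Prop :=
  ∀ μ ∈ spectrum ℂ (M.map (algebraMap ℝ ℂ)), ‖μ‖ < 1

theorem stmt11 {n τ : ℕ}
    (X2m F : Matrix (Fin n) (Fin τ) ℝ)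
    (Θ : Matrix (Fin τ) (Fin n) ℝ)
    (hsym : (X2m * Θ)ᵀ = X2m * Θ)
    (hpd : (Matrix.fromBlocks (X2m * Θ) (F * Θ) (Θᵀ * Fᵀ) (X2m * Θ)).PosDef) :
    X2m.rank = n ∧ X2m * (Θ * (X2m * Θ)⁻¹) = 1 ∧
      IsStable (F * (Θ * (X2m * Θ)⁻¹)) := by
  set P : Matrix (Fin n) (Fin n) ℝ := X2m * Θ with hPdef
  -- P is positive definite
  have hP : P.PosDef := by
    refine Matrix.PosDef.of_dotProduct_mulVec_pos (by rw [Matrix.IsHermitian, Matrix.conjTranspose_eq_transpose_of_trivial]; exact hsym) ?_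
    intro x hx
    have hx' : (Sum.elim x 0 : Fin n ⊕ Fin n → ℝ) ≠ 0 := by
      intro h
      exact hx (funext fun i => congrFun h (Sum.inl i))
    have hstar : star (Sum.elim x 0 : Fin n ⊕ Fin n → ℝ) = Sum.elim (star x) 0 := by
      funext i; cases i <;> simp
    have h2 := hpd.dotProduct_mulVec_pos hx'
    simpa [hstar, Matrix.fromBlocks_mulVec, sumElim_dotProduct_sumElim,
      Sum.elim_comp_inl, Sum.elim_comp_inr] using h2
  have hPdet : IsUnit P.det := hP.det_pos.ne'.isUnit
  -- right inverse
  have hright : X2m * (Θ * P⁻¹) = 1 := by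
    rw [hPdef, ← Matrix.mul_assoc, ← hPdef, Matrix.mul_nonsing_inv _ hPdet]
  refine ⟨?_, hright, ?_⟩
  · -- rank
    refine le_antisymm (le_trans X2m.rank_le_card_height (by simp)) ?_
    calc n = (1 : Matrix (Fin n) (Fin n) ℝ).rank := by simp [Matrix.rank_one]
      _ = (X2m * (Θ * P⁻¹)).rank := by rw [hright]
      _ ≤ X2m.rank := Matrix.rank_mul_le_left _ _
  · -- stability
    intro μ hμ
    set M : Matrix (Fin n) (Fin n) ℝ := F * (Θ * P⁻¹) with hMdef
    have hMP : M * P = F * Θ := by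
      rw [hMdef, Matrix.mul_assoc, Matrix.mul_assoc, Matrix.nonsing_inv_mul _ hPdet,
        Matrix.mul_one]
    -- eigenvector of the transpose
    have hdet : ((μ • 1 - M.map φ)ᵀ).det = 0 := by
      rw [Matrix.det_transpose]
      by_contra h
      exact (spectrum.mem_iff.mp hμ) <| by
        rw [Algebra.algebraMap_eq_smul_one]
        exact (Matrix.isUnit_iff_isUnit_det _).mpr (isUnit_iff_ne_zero.mpr h)
    obtain ⟨w, hw0, hw⟩ := Matrix.exists_mulVec_eq_zero_iff.mpr hdet
    have hN : (M.map φ)ᵀ *ᵥ w = μ • w := by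
      rw [Matrix.transpose_sub, Matrix.transpose_smul, Matrix.transpose_one,
        Matrix.sub_mulVec, Matrix.smul_mulVec, Matrix.one_mulVec, sub_eq_zero] at hw
      exact hw.symm
    have hppos : 0 < star w ⬝ᵥ ((P.map φ) *ᵥ w) := (posDef_mapC hP).dotProduct_mulVec_pos hw0
    -- conjugate eigen-relation
    have hNstar : (M.map φ)ᵀ *ᵥ star w = (starRingEnd ℂ μ) • star w := by
      rw [← Matrix.transpose_map, mapC_mulVec_star, Matrix.transpose_map, hN, star_smul]
      rfl
    -- key dot products
    have hdot1 : star w ⬝ᵥ (((F * Θ).map φ) *ᵥ w)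
        = (starRingEnd ℂ μ) * (star w ⬝ᵥ ((P.map φ) *ᵥ w)) := by
      rw [← hMP, Matrix.map_mul, ← Matrix.mulVec_mulVec, Matrix.dotProduct_mulVec,
        ← Matrix.mulVec_transpose, hNstar, smul_dotProduct, smul_eq_mul]
    have hdot2 : star w ⬝ᵥ (((Θᵀ * Fᵀ).map φ) *ᵥ w)
        = μ * (star w ⬝ᵥ ((P.map φ) *ᵥ w)) := by
      have hDT : Θᵀ * Fᵀ = P * Mᵀ := by
        rw [← Matrix.transpose_mul, ← hMP, Matrix.transpose_mul, hsym]
      rw [hDT, Matrix.map_mul, ← Matrix.mulVec_mulVec, Matrix.transpose_map, hN,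
        Matrix.mulVec_smul, dotProduct_smul, smul_eq_mul]
    -- test vector
    set u : Fin n ⊕ Fin n → ℂ := Sum.elim ((-(starRingEnd ℂ μ)) • w) w with hudef
    have hu0 : u ≠ 0 := by
      intro h
      exact hw0 (funext fun i => congrFun h (Sum.inr i))
    have hustar : star u = Sum.elim ((-μ) • star w) (star w) := by
      funext i; cases i <;> simp [hudef, mul_comm]
    have hQ : ((Matrix.fromBlocks P (F * Θ) (Θᵀ * Fᵀ) P).map φ).PosDef := posDef_mapC hpd
    have hq := hQ.dotProduct_mulVec_pos hu0
    rw [Matrix.fromBlocks_map, hudef, hustar] at hq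
    simp only [Matrix.fromBlocks_mulVec, Sum.elim_comp_inl, Sum.elim_comp_inr,
      sumElim_dotProduct_sumElim] at hq
    have hc : μ * (starRingEnd ℂ) μ = (Complex.normSq μ : ℂ) := Complex.mul_conj μ
    have heq : ((-μ) • star w) ⬝ᵥ
          ((P.map φ) *ᵥ ((-(starRingEnd ℂ μ)) • w) + ((F * Θ).map φ) *ᵥ w)
        + star w ⬝ᵥ
          (((Θᵀ * Fᵀ).map φ) *ᵥ ((-(starRingEnd ℂ μ)) • w) + (P.map φ) *ᵥ w)
        = (1 - (Complex.normSq μ : ℂ)) * (star w ⬝ᵥ ((P.map φ) *ᵥ w)) := by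
      rw [Matrix.mulVec_smul, Matrix.mulVec_smul, dotProduct_add, dotProduct_add,
        smul_dotProduct, smul_dotProduct, dotProduct_smul,
        dotProduct_smul, hdot1, hdot2]
      simp only [smul_eq_mul]
      linear_combination (-(star w ⬝ᵥ ((P.map φ) *ᵥ w))) * hc
    rw [heq] at hq
    -- extract real inequalities
    have him : 0 < (1 - Complex.normSq μ) * ((star w ⬝ᵥ ((P.map φ) *ᵥ w)).re) := by
      obtain ⟨hre, _⟩ := Complex.lt_def.mp hq
      simpa [Complex.mul_re] using hre
    have hpre : 0 < (star w ⬝ᵥ ((P.map φ) *ᵥ w)).re := (Complex.lt_def.mp hppos).1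
    have hs : Complex.normSq μ < 1 := by nlinarith
    have habs : ‖μ‖ ^ 2 = Complex.normSq μ := by
      rw [Complex.sq_norm]
    nlinarith [norm_nonneg μ]

end
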